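/- arXiv:2511.16253 — 8 statements merged into one kernel-verified Lean document; each statement's English description precedes it below -/
import Mathlib

section
/- Let n ≥ 1, β > 0, T > 0, and let P be a real symmetric positive definite n×n matrix with smallest eigenvalue λ_min(P) and largest eigenvalue λ_max(P). Let (l_k)_{k∈ℕ} be a sequence of positive natural numbers, (Φ_k)_{k∈ℕ} real n×n matrices, and (x_k)_{k∈ℕ} in ℝ^n with x_{k+1} = Φ_k x_k and x_kᵀ Φ_kᵀ P Φ_k x_k ≤ e^{−β l_k T} · x_kᵀ P x_k for all k. Define τ_k = T · Σ_{j<k} l_j. Then for every k ∈ ℕ, ‖x_k‖ ≤ √(λ_max(P)/λ_min(P)) · e^{−(β/2) τ_k} · ‖x_0‖; in particular the closed-loop sampled-data system is exponentially stable with decay rate β/2. -/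
open Matrix


lemma quad_expand {n : ℕ} (P : Matrix (Fin n) (Fin n) ℝ) (hP : P.IsHermitian) (v : Fin n → ℝ) :
    v ⬝ᵥ P.mulVec v = ∑ i, hP.eigenvalues i * ((star (hP.eigenvectorUnitary : Matrix (Fin n) (Fin n) ℝ) *ᵥ v) i)^2 := by
  set U : Matrix (Fin n) (Fin n) ℝ := (hP.eigenvectorUnitary : Matrix (Fin n) (Fin n) ℝ) with hU
  conv_lhs => rw [hP.spectral_theorem, Unitary.conjStarAlgAut_apply]
  rw [← hU, ← mulVec_mulVec, ← mulVec_mulVec, dotProduct_mulVec, ← mulVec_transpose]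
  have hUt : Uᵀ = star U := by ext i j; simp [Matrix.star_apply]
  rw [hUt]
  simp [dotProduct, mulVec_diagonal, Function.comp]
  congr 1; ext i; ring

lemma unitary_norm {n : ℕ} (P : Matrix (Fin n) (Fin n) ℝ) (hP : P.IsHermitian) (v : Fin n → ℝ) :
    ∑ i, ((star (hP.eigenvectorUnitary : Matrix (Fin n) (Fin n) ℝ) *ᵥ v) i)^2 = v ⬝ᵥ v := by
  set U : Matrix (Fin n) (Fin n) ℝ := (hP.eigenvectorUnitary : Matrix (Fin n) (Fin n) ℝ) with hU
  set w := star U *ᵥ v with hw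
  have h1 : ∑ i, (w i)^2 = w ⬝ᵥ w := by simp [dotProduct, sq]
  rw [h1, hw, dotProduct_mulVec, ← mulVec_transpose]
  have hUt : (star U)ᵀ = star (star U) := by ext i j; simp [Matrix.star_apply]
  rw [hUt, star_star, mulVec_mulVec]
  have : U * star U = 1 := by
    have := hP.eigenvectorUnitary.2
    rw [Matrix.mem_unitaryGroup_iff] at this
    exact this
  rw [this, one_mulVec]

lemma quad_bounds {n : ℕ} (hn : 1 ≤ n) (P : Matrix (Fin n) (Fin n) ℝ) (hP : P.IsHermitian)
    (v : Fin n → ℝ) :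
    (⨅ i, hP.eigenvalues i) * (v ⬝ᵥ v) ≤ v ⬝ᵥ P.mulVec v ∧
      v ⬝ᵥ P.mulVec v ≤ (⨆ i, hP.eigenvalues i) * (v ⬝ᵥ v) := by
  haveI : Nonempty (Fin n) := ⟨⟨0, hn⟩⟩
  rw [quad_expand P hP v, ← unitary_norm P hP v, Finset.mul_sum, Finset.mul_sum]
  constructor <;> apply Finset.sum_le_sum <;> intro i _
  · exact mul_le_mul_of_nonneg_right
      (ciInf_le (Set.Finite.bddBelow (Set.finite_range _)) i) (sq_nonneg _)
  · exact mul_le_mul_of_nonneg_right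
      (le_ciSup (Set.Finite.bddAbove (Set.finite_range _)) i) (sq_nonneg _)

/-- Exponential-stability conclusion of Proposition 1: the per-horizon Lyapunov decrease
implies `‖x_k‖ ≤ √(λ_max(P)/λ_min(P)) · e^{−(β/2) τ_k} · ‖x_0‖`. -/
theorem stmt1 (n : ℕ) (hn : 1 ≤ n) (β T : ℝ) (hβ : 0 < β) (hT : 0 < T)
    (P : Matrix (Fin n) (Fin n) ℝ) (hP : P.PosDef)
    (l : ℕ → ℕ) (hl : ∀ k, 0 < l k)
    (Φ : ℕ → Matrix (Fin n) (Fin n) ℝ)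
    (x : ℕ → EuclideanSpace ℝ (Fin n))
    (hx : ∀ k, x (k + 1) = (WithLp.toLp 2 ((Φ k).mulVec (x k)) : EuclideanSpace ℝ (Fin n)))
    (hdec : ∀ k, ((Φ k).mulVec (x k)) ⬝ᵥ P.mulVec ((Φ k).mulVec (x k)) ≤
      Real.exp (-β * (l k : ℝ) * T) * (x k ⬝ᵥ P.mulVec (x k)))
    (τ : ℕ → ℝ) (hτ : ∀ k, τ k = T * ∑ j ∈ Finset.range k, (l j : ℝ)) :
    ∀ k, ‖x k‖ ≤ Real.sqrt ((⨆ i, hP.1.eigenvalues i) / (⨅ i, hP.1.eigenvalues i)) *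
      Real.exp (-(β / 2) * τ k) * ‖x 0‖ := by
  haveI : Nonempty (Fin n) := ⟨⟨0, hn⟩⟩
  set lam_min := ⨅ i, hP.1.eigenvalues i with hlm
  set lam_max := ⨆ i, hP.1.eigenvalues i with hlM
  have hmin_pos : 0 < lam_min := by
    rw [hlm]
    have : BddBelow (Set.range hP.1.eigenvalues) := Set.Finite.bddBelow (Set.finite_range _)
    obtain ⟨i, hi⟩ := exists_eq_ciInf_of_finite (f := hP.1.eigenvalues)
    rw [← hi]; exact hP.eigenvalues_pos i
  have hmax_pos : 0 < lam_max := by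
    have i0 : Fin n := ⟨0, hn⟩
    calc (0:ℝ) < hP.1.eigenvalues i0 := hP.eigenvalues_pos i0
      _ ≤ lam_max := le_ciSup (Set.Finite.bddAbove (Set.finite_range _)) i0
  -- Lyapunov function
  set V : ℕ → ℝ := fun k => (x k : Fin n → ℝ) ⬝ᵥ P.mulVec (x k) with hV
  have hVdec : ∀ k, V k ≤ Real.exp (-β * τ k) * V 0 := by
    intro k
    induction k with
    | zero => simp [hτ 0]
    | succ k ih =>
      have hV0 : 0 ≤ V 0 := by
        rcases eq_or_ne (x 0 : Fin n → ℝ) 0 with h | h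
        · simp [hV, h]
        · exact le_of_lt (by simpa using hP.dotProduct_mulVec_pos h)
      have h1 : V (k+1) ≤ Real.exp (-β * (l k : ℝ) * T) * V k := by
        rw [hV]; simp only [hx k]; exact hdec k
      calc V (k+1) ≤ Real.exp (-β * (l k : ℝ) * T) * V k := h1
        _ ≤ Real.exp (-β * (l k : ℝ) * T) * (Real.exp (-β * τ k) * V 0) := by
            exact mul_le_mul_of_nonneg_left ih (Real.exp_pos _).le
        _ = Real.exp (-β * τ (k+1)) * V 0 := by
            rw [← mul_assoc, ← Real.exp_add, hτ k, hτ (k+1), Finset.sum_range_succ]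
            ring_nf
  intro k
  have hb := quad_bounds hn P hP.1 (x k)
  have hb0 := quad_bounds hn P hP.1 (x 0)
  have hnorm : ∀ j, ((x j : Fin n → ℝ) ⬝ᵥ (x j : Fin n → ℝ)) = ‖x j‖^2 := by
    intro j
    rw [EuclideanSpace.norm_eq]
    rw [Real.sq_sqrt (by positivity)]
    simp [dotProduct, sq]
  have key : lam_min * ‖x k‖^2 ≤ Real.exp (-β * τ k) * (lam_max * ‖x 0‖^2) := by
    calc lam_min * ‖x k‖^2 = lam_min * ((x k : Fin n → ℝ) ⬝ᵥ (x k : Fin n → ℝ)) := by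
          rw [hnorm k]
      _ ≤ V k := hb.1
      _ ≤ Real.exp (-β * τ k) * V 0 := hVdec k
      _ ≤ Real.exp (-β * τ k) * (lam_max * ((x 0 : Fin n → ℝ) ⬝ᵥ (x 0 : Fin n → ℝ))) :=
          mul_le_mul_of_nonneg_left hb0.2 (Real.exp_pos _).le
      _ = Real.exp (-β * τ k) * (lam_max * ‖x 0‖^2) := by rw [hnorm 0]
  have h2 : ‖x k‖^2 ≤ (lam_max / lam_min) * Real.exp (-β * τ k) * ‖x 0‖^2 := by
    rw [div_mul_eq_mul_div, div_mul_eq_mul_div, le_div_iff₀ hmin_pos]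
    nlinarith [key]
  have h3 : ‖x k‖ ≤ Real.sqrt ((lam_max / lam_min) * Real.exp (-β * τ k) * ‖x 0‖^2) := by
    rw [← Real.sqrt_sq (norm_nonneg (x k))]
    exact Real.sqrt_le_sqrt h2
  calc ‖x k‖ ≤ Real.sqrt ((lam_max / lam_min) * Real.exp (-β * τ k) * ‖x 0‖^2) := h3
    _ = Real.sqrt (lam_max / lam_min) * Real.exp (-(β/2) * τ k) * ‖x 0‖ := by
        rw [Real.sqrt_mul (by positivity), Real.sqrt_mul (by positivity),
          Real.sqrt_sq (norm_nonneg _)]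
        congr 1
        rw [← Real.exp_half]
        ring_nf
end

section
/- Let n ≥ 1, let P and M be real symmetric positive definite n×n matrices, and let Φ be a real n×n matrix. Then for all x, w ∈ ℝ^n, (Φx + w)ᵀ P (Φx + w) ≤ xᵀ Φᵀ (P + M) Φ x + ‖w‖² · λ_max(P M⁻¹ P + P), where λ_max denotes the largest eigenvalue of the real symmetric matrix P M⁻¹ P + P and ‖·‖ is the Euclidean norm. -/
open Matrix

/-- The identity map from plain vectors to Euclidean space (type synonym conversion). -/
noncomputable def toE {n : ℕ} (v : Fin n → ℝ) : EuclideanSpace ℝ (Fin n) :=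
  (WithLp.equiv 2 (Fin n → ℝ)).symm v

/-- transpose shift for dot products over ℝ. -/
lemma transp_dot {n : ℕ} (B : Matrix (Fin n) (Fin n) ℝ) (u v : Fin n → ℝ) :
    (Bᵀ *ᵥ u) ⬝ᵥ v = u ⬝ᵥ (B *ᵥ v) := by
  rw [mulVec_transpose, Matrix.dotProduct_mulVec]

lemma mul_dot {n : ℕ} (C : Matrix (Fin n) (Fin n) ℝ) (u v : Fin n → ℝ) :
    (C *ᵥ u) ⬝ᵥ v = u ⬝ᵥ (Cᵀ *ᵥ v) := by
  rw [← transp_dot Cᵀ u v, transpose_transpose]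

/-- Rayleigh quotient upper bound for a real symmetric matrix. -/
lemma rayleigh_bound {n : ℕ} (hn : 1 ≤ n) {A : Matrix (Fin n) (Fin n) ℝ}
    (hA : A.IsHermitian) (w : Fin n → ℝ) :
    w ⬝ᵥ A *ᵥ w ≤ (w ⬝ᵥ w) * ⨆ i, hA.eigenvalues i := by
  haveI : Nonempty (Fin n) := ⟨⟨0, hn⟩⟩
  set U : Matrix (Fin n) (Fin n) ℝ := (hA.eigenvectorUnitary : Matrix (Fin n) (Fin n) ℝ) with hU
  set μ : Fin n → ℝ := hA.eigenvalues with hμ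
  set y : Fin n → ℝ := Uᵀ *ᵥ w with hy
  have hstar : star U = Uᵀ := by
    rw [Matrix.star_eq_conjTranspose, conjTranspose_eq_transpose_of_trivial]
  have hdiag : (RCLike.ofReal ∘ μ : Fin n → ℝ) = μ := by
    ext i; simp
  have h1 : w ⬝ᵥ A *ᵥ w = y ⬝ᵥ (diagonal μ) *ᵥ y := by
    conv_lhs => rw [hA.spectral_theorem]
    simp only [Unitary.conjStarAlgAut_apply, Unitary.coe_star, ← hU]
    rw [hstar, hdiag, ← mulVec_mulVec, ← mulVec_mulVec, mul_dot, transpose_transpose, hy]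
  have h2 : y ⬝ᵥ y = w ⬝ᵥ w := by
    rw [hy, transp_dot, mulVec_mulVec]
    have : U * Uᵀ = 1 := by
      rw [← hstar]; exact (Matrix.mem_unitaryGroup_iff).mp hA.eigenvectorUnitary.2
    rw [this, one_mulVec]
  have hbdd : BddAbove (Set.range μ) := (Set.finite_range μ).bddAbove
  have hle : ∀ i, μ i ≤ ⨆ i, μ i := fun i => le_ciSup hbdd i
  rw [h1, ← h2]
  have e1 : y ⬝ᵥ (diagonal μ) *ᵥ y = ∑ i, μ i * (y i * y i) := by
    simp only [dotProduct, mulVec_diagonal]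
    exact Finset.sum_congr rfl fun i _ => by ring
  have e2 : (y ⬝ᵥ y) * (⨆ i, μ i) = ∑ i, (⨆ i, μ i) * (y i * y i) := by
    simp only [dotProduct, Finset.sum_mul]
    exact Finset.sum_congr rfl fun i _ => by ring
  rw [e1, e2]
  exact Finset.sum_le_sum fun i _ =>
    mul_le_mul_of_nonneg_right (hle i) (mul_self_nonneg _)

/-- One-step Lyapunov upper bound (equations (51)–(53)) of Proposition 3:
`(Φx + w)ᵀ P (Φx + w) ≤ xᵀ Φᵀ (P + M) Φ x + ‖w‖² λ_max(P M⁻¹ P + P)`. -/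
theorem stmt8 (n : ℕ) (hn : 1 ≤ n) (P M : Matrix (Fin n) (Fin n) ℝ)
    (hP : P.PosDef) (hM : M.PosDef) (Φ : Matrix (Fin n) (Fin n) ℝ)
    (hH : (P * M⁻¹ * P + P).IsHermitian) :
    ∀ x w : EuclideanSpace ℝ (Fin n),
      (toE (Φ.mulVec x) + w) ⬝ᵥ P.mulVec (toE (Φ.mulVec x) + w) ≤
        (Φ.mulVec x) ⬝ᵥ (P + M).mulVec (Φ.mulVec x) +
          ‖w‖ ^ 2 * (⨆ i, hH.eigenvalues i) := by
  intro x w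
  obtain ⟨v, rfl⟩ : ∃ v : Fin n → ℝ, toE v = w := ⟨w, rfl⟩
  set y : Fin n → ℝ := Φ.mulVec x with hy
  have hPt : Pᵀ = P := by
    have := hP.1; rwa [Matrix.IsHermitian, conjTranspose_eq_transpose_of_trivial] at this
  have hMt : Mᵀ = M := by
    have := hM.1; rwa [Matrix.IsHermitian, conjTranspose_eq_transpose_of_trivial] at this
  have hMinvT : (M⁻¹)ᵀ = M⁻¹ := by rw [transpose_nonsing_inv, hMt]
  have hMunit : IsUnit M.det := isUnit_iff_ne_zero.mpr (ne_of_gt hM.det_pos)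
  have hMMinv : M * M⁻¹ = 1 := mul_nonsing_inv M hMunit
  have hMinvM : M⁻¹ * M = 1 := nonsing_inv_mul M hMunit
  -- norm squared is dot product
  have hw2 : ‖toE v‖ ^ 2 = v ⬝ᵥ v := by
    rw [← real_inner_self_eq_norm_sq]
    simp only [toE, WithLp.equiv_symm_apply, PiLp.inner_apply, dotProduct, RCLike.inner_apply, conj_trivial, mul_comm]
  -- key cross-term symmetry
  have hsym : y ⬝ᵥ P *ᵥ v = v ⬝ᵥ P *ᵥ y := by
    rw [← transp_dot P y v, hPt, dotProduct_comm]
  -- Young-type inequality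
  have hyoung : 2 * (v ⬝ᵥ P *ᵥ y) ≤
      y ⬝ᵥ M *ᵥ y + v ⬝ᵥ (P * M⁻¹ * P) *ᵥ v := by
    set z : Fin n → ℝ := y - (M⁻¹ * P) *ᵥ v with hz
    have h0 : 0 ≤ z ⬝ᵥ M *ᵥ z := by
      have := hM.posSemidef.dotProduct_mulVec_nonneg z
      simpa using this
    have e1 : z ⬝ᵥ M *ᵥ z = y ⬝ᵥ M *ᵥ y - 2 * (v ⬝ᵥ P *ᵥ y)
        + v ⬝ᵥ (P * M⁻¹ * P) *ᵥ v := by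
      have c1 : ((M⁻¹ * P) *ᵥ v) ⬝ᵥ (M *ᵥ y) = v ⬝ᵥ P *ᵥ y := by
        rw [mul_dot, mulVec_mulVec, transpose_mul, hPt, hMinvT, mul_assoc, hMinvM, mul_one]
      have c2 : y ⬝ᵥ M *ᵥ ((M⁻¹ * P) *ᵥ v) = v ⬝ᵥ P *ᵥ y := by
        rw [mulVec_mulVec, ← mul_assoc, hMMinv, one_mul, ← transp_dot P y, hPt, dotProduct_comm]
      have c3 : ((M⁻¹ * P) *ᵥ v) ⬝ᵥ (M *ᵥ ((M⁻¹ * P) *ᵥ v))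
          = v ⬝ᵥ (P * M⁻¹ * P) *ᵥ v := by
        rw [mul_dot, mulVec_mulVec, mulVec_mulVec, transpose_mul, hPt, hMinvT]
        congr 2
        rw [← mul_assoc, mul_assoc (P * M⁻¹) M M⁻¹, hMMinv, mul_one]
      rw [hz, sub_dotProduct, mulVec_sub, dotProduct_sub, dotProduct_sub, c1, c2, c3]
      ring
    linarith
  -- Rayleigh bound
  have hray := rayleigh_bound hn hH v
  have hraye : v ⬝ᵥ (P * M⁻¹ * P + P) *ᵥ v
      = v ⬝ᵥ (P * M⁻¹ * P) *ᵥ v + v ⬝ᵥ P *ᵥ v := by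
    rw [add_mulVec, dotProduct_add]
  -- expand LHS
  have hLHS : (toE y + toE v) ⬝ᵥ P.mulVec (toE y + toE v)
      = y ⬝ᵥ P *ᵥ y + 2 * (v ⬝ᵥ P *ᵥ y) + v ⬝ᵥ P *ᵥ v := by
    show (y + v) ⬝ᵥ P *ᵥ (y + v) = _
    rw [add_dotProduct, mulVec_add, dotProduct_add, dotProduct_add, hsym]
    ring
  have hRHS : y ⬝ᵥ (P + M).mulVec y = y ⬝ᵥ P *ᵥ y + y ⬝ᵥ M *ᵥ y := by
    rw [add_mulVec, dotProduct_add]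
  rw [hLHS, hRHS, hw2]
  rw [hraye] at hray
  linarith
end

section
/- Let n ≥ 1, let P and M be real symmetric positive definite n×n matrices, let Φ be a real n×n matrix, and let γ > 0, θ ≥ 0 and 0 < ρ. Let x, w ∈ ℝ^n satisfy ‖w‖ ≤ θ and xᵀ P x > 1, and suppose the triggering condition −xᵀ Φᵀ (P + M) Φ x + (ρ − γ)·xᵀ P x − θ² λ_max(P M⁻¹ P + P) + γ ≥ 0 holds. Then (Φx + w)ᵀ P (Φx + w) ≤ ρ · xᵀ P x. -/
open Matrix RealInnerProductSpace

lemma rayleigh_aux {n : ℕ} (hn : 1 ≤ n) {H : Matrix (Fin n) (Fin n) ℝ}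
    (hH : H.IsHermitian) (w : EuclideanSpace ℝ (Fin n)) :
    ⇑w ⬝ᵥ H.mulVec ⇑w ≤ (⨆ i, hH.eigenvalues i) * ‖w‖ ^ 2 := by
  haveI : Nonempty (Fin n) := ⟨⟨0, hn⟩⟩
  set B := hH.eigenvectorBasis with hB
  set T := Matrix.toEuclideanLin H with hT
  have hsym : T.IsSymmetric := Matrix.isHermitian_iff_isSymmetric.1 hH
  have hTB : ∀ i, T (B i) = hH.eigenvalues i • B i := by
    intro i
    apply (WithLp.equiv 2 (Fin n → ℝ)).injective
    ext j
    have := congrFun (hH.mulVec_eigenvectorBasis i) j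
    simpa [hT, Matrix.toEuclideanLin_apply] using this
  have hinner : ⟪w, T w⟫ = ⇑w ⬝ᵥ H.mulVec ⇑w := by
    simp [hT, Matrix.toEuclideanLin_apply, PiLp.inner_apply, dotProduct,
      RCLike.inner_apply, conj_trivial, mul_comm]
  have hexp : ⟪w, T w⟫ = ∑ i, hH.eigenvalues i * ⟪B i, w⟫ ^ 2 := by
    rw [← B.sum_inner_mul_inner w (T w)]
    refine Finset.sum_congr rfl fun i _ => ?_
    rw [← hsym (B i) w, hTB i, real_inner_smul_left, real_inner_comm w (B i)]
    ring
  have hnorm : ‖w‖ ^ 2 = ∑ i, ⟪B i, w⟫ ^ 2 := by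
    rw [← real_inner_self_eq_norm_sq, ← B.sum_inner_mul_inner w w]
    refine Finset.sum_congr rfl fun i _ => ?_
    rw [real_inner_comm w (B i)]; ring
  rw [← hinner, hexp, hnorm, Finset.mul_sum]
  refine Finset.sum_le_sum fun i _ => ?_
  exact mul_le_mul_of_nonneg_right
    (le_ciSup (Set.Finite.bddAbove (Set.finite_range _)) i) (sq_nonneg _)

/-- Per-step decrease claim (Case (i)) in the proof of Proposition 3: outside the unit
ellipsoid, the quadratic triggering condition `(x,1)ᵀ U_σ (x,1) ≥ 0` implies
`(Φx + w)ᵀ P (Φx + w) ≤ ρ xᵀ P x` for any disturbance with `‖w‖ ≤ θ`. -/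
theorem stmt9 (n : ℕ) (hn : 1 ≤ n) (P M Φ : Matrix (Fin n) (Fin n) ℝ)
    (hP : P.PosDef) (hM : M.PosDef)
    (γ θ ρ : ℝ) (hγ : 0 < γ) (hθ : 0 ≤ θ) (hρ : 0 < ρ)
    (hH : (P * M⁻¹ * P + P).IsHermitian)
    (x w : EuclideanSpace ℝ (Fin n)) (hw : ‖w‖ ≤ θ) (hx : 1 < x ⬝ᵥ P.mulVec x)
    (htrig : 0 ≤ -((Φ.mulVec x) ⬝ᵥ (P + M).mulVec (Φ.mulVec x))
      + (ρ - γ) * (x ⬝ᵥ P.mulVec x) - θ ^ 2 * (⨆ i, hH.eigenvalues i) + γ) :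
    (toE (Φ.mulVec x) + w) ⬝ᵥ P.mulVec (toE (Φ.mulVec x) + w) ≤
      ρ * (x ⬝ᵥ P.mulVec x) := by
  haveI : Nonempty (Fin n) := ⟨⟨0, hn⟩⟩
  set y : Fin n → ℝ := Φ.mulVec x with hy
  set W : Fin n → ℝ := ⇑w with hW
  have hPt : Pᵀ = P := hP.isHermitian.eq
  have hMt : Mᵀ = M := hM.isHermitian.eq
  have dsym : ∀ (A : Matrix (Fin n) (Fin n) ℝ), Aᵀ = A → ∀ a b : Fin n → ℝ,
      a ⬝ᵥ A.mulVec b = b ⬝ᵥ A.mulVec a := by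
    intro A hA a b
    rw [Matrix.dotProduct_mulVec, ← Matrix.mulVec_transpose, hA, dotProduct_comm]
  have hcoe : ⇑(toE y + w) = y + W := rfl
  have hMMi : M * M⁻¹ = 1 :=
    Matrix.mul_nonsing_inv M ((Matrix.isUnit_iff_isUnit_det M).1 hM.isUnit)
  -- expand the left-hand side
  have hL : (toE y + w) ⬝ᵥ P.mulVec (toE y + w)
      = y ⬝ᵥ P.mulVec y + 2 * (y ⬝ᵥ P.mulVec W) + W ⬝ᵥ P.mulVec W := by
    show (y + W) ⬝ᵥ P.mulVec (y + W) = _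
    rw [Matrix.mulVec_add, add_dotProduct, dotProduct_add,
      dotProduct_add, dsym P hPt W y]
    ring
  -- Young-type inequality
  have hYoung : 2 * (y ⬝ᵥ P.mulVec W)
      ≤ y ⬝ᵥ M.mulVec y + W ⬝ᵥ (P * M⁻¹ * P).mulVec W := by
    set z : Fin n → ℝ := M⁻¹.mulVec (P.mulVec W) with hz
    have h0 : 0 ≤ (y - z) ⬝ᵥ M.mulVec (y - z) := by
      have := hM.posSemidef.re_dotProduct_nonneg (y - z)
      simpa using this
    have hMz : M.mulVec z = P.mulVec W := by
      rw [hz, Matrix.mulVec_mulVec, hMMi, Matrix.one_mulVec]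
    have hyz : y ⬝ᵥ M.mulVec z = y ⬝ᵥ P.mulVec W := by rw [hMz]
    have hzy : z ⬝ᵥ M.mulVec y = y ⬝ᵥ P.mulVec W := by
      rw [dsym M hMt z y, hMz]
    have hzz : z ⬝ᵥ M.mulVec z = W ⬝ᵥ (P * M⁻¹ * P).mulVec W := by
      rw [hMz]
      symm
      rw [← Matrix.mulVec_mulVec, ← Matrix.mulVec_mulVec,
        dsym P hPt W (M⁻¹.mulVec (P.mulVec W))]
    have hexp : (y - z) ⬝ᵥ M.mulVec (y - z)
        = y ⬝ᵥ M.mulVec y - y ⬝ᵥ M.mulVec z - z ⬝ᵥ M.mulVec y + z ⬝ᵥ M.mulVec z := by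
      rw [Matrix.mulVec_sub, sub_dotProduct, dotProduct_sub,
        dotProduct_sub]
      ring
    rw [hexp, hyz, hzy, hzz] at h0
    linarith
  -- Rayleigh bound
  have hR : W ⬝ᵥ (P * M⁻¹ * P).mulVec W + W ⬝ᵥ P.mulVec W
      ≤ (⨆ i, hH.eigenvalues i) * ‖w‖ ^ 2 := by
    have := rayleigh_aux hn hH w
    rwa [Matrix.add_mulVec, dotProduct_add] at this
  -- nonnegativity of the top eigenvalue
  have hPSD : (P * M⁻¹ * P + P).PosSemidef := by
    have h1 : (P * M⁻¹ * Pᴴ).PosSemidef :=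
      hM.inv.posSemidef.mul_mul_conjTranspose_same P
    rw [hP.isHermitian] at h1
    exact h1.add hP.posSemidef
  have hlam0 : 0 ≤ ⨆ i, hH.eigenvalues i :=
    le_trans (hPSD.eigenvalues_nonneg ⟨0, hn⟩)
      (le_ciSup (f := hH.eigenvalues) (Set.Finite.bddAbove (Set.finite_range _)) ⟨0, hn⟩)
  have hw2 : ‖w‖ ^ 2 ≤ θ ^ 2 := by nlinarith [norm_nonneg w]
  have hlamw : (⨆ i, hH.eigenvalues i) * ‖w‖ ^ 2 ≤ θ ^ 2 * (⨆ i, hH.eigenvalues i) := by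
    nlinarith
  -- rewrite the trigger
  have htrig' : 0 ≤ -(y ⬝ᵥ P.mulVec y + y ⬝ᵥ M.mulVec y)
      + (ρ - γ) * (x ⬝ᵥ P.mulVec x) - θ ^ 2 * (⨆ i, hH.eigenvalues i) + γ := by
    have : (Φ.mulVec x) ⬝ᵥ (P + M).mulVec (Φ.mulVec x)
        = y ⬝ᵥ P.mulVec y + y ⬝ᵥ M.mulVec y := by
      rw [Matrix.add_mulVec, dotProduct_add]
    rw [← this]
    exact htrig
  have hγx : γ ≤ γ * (x ⬝ᵥ P.mulVec x) := by nlinarith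
  rw [hL]
  linarith
end

section
/- Let n ≥ 1, let P and M be real symmetric positive definite n×n matrices, let Φ be a real n×n matrix, and let γ > 0, χ > 0 and ρ > 0. Suppose (i) Φᵀ (P + M) Φ − (ρ − γ) P is negative semidefinite, and (ii) the block matrix [[M, P], [P, (γ/χ)I − P]] is positive semidefinite. Then for every x ∈ ℝ^n, −xᵀ Φᵀ (P + M) Φ x + (ρ − γ)·xᵀ P x − χ · λ_max(P M⁻¹ P + P) + γ ≥ 0. -/
open Matrix

/-- Feasibility claim in the proof of Proposition 3: the offline LMIs (45)–(46) imply
that the quadratic triggering condition `(x,1)ᵀ U_{σ*} (x,1) ≥ 0` holds for every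
state `x`. -/
theorem stmt10 (n : ℕ) (hn : 1 ≤ n) (P M Φ : Matrix (Fin n) (Fin n) ℝ)
    (hP : P.PosDef) (hM : M.PosDef)
    (γ χ ρ : ℝ) (hγ : 0 < γ) (hχ : 0 < χ) (hρ : 0 < ρ)
    (hH : (P * M⁻¹ * P + P).IsHermitian)
    (h1 : (-(Φᵀ * (P + M) * Φ - (ρ - γ) • P)).PosSemidef)
    (h2 : (Matrix.fromBlocks M P P
      ((γ / χ) • (1 : Matrix (Fin n) (Fin n) ℝ) - P)).PosSemidef) :
    ∀ x : Fin n → ℝ,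
      0 ≤ -((Φ.mulVec x) ⬝ᵥ (P + M).mulVec (Φ.mulVec x))
        + (ρ - γ) * (x ⬝ᵥ P.mulVec x) - χ * (⨆ i, hH.eigenvalues i) + γ := by
  intro x
  haveI : Nonempty (Fin n) := ⟨⟨0, hn⟩⟩
  haveI : Invertible M := M.invertibleOfIsUnitDet hM.det_pos.ne'.isUnit
  -- Part 1: from h1
  have e1 : 0 ≤ -((Φ.mulVec x) ⬝ᵥ (P + M).mulVec (Φ.mulVec x))
      + (ρ - γ) * (x ⬝ᵥ P.mulVec x) := by
    have h := h1.dotProduct_mulVec_nonneg x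
    simp only [star_trivial, neg_mulVec, sub_mulVec, smul_mulVec, dotProduct_neg,
      dotProduct_sub, dotProduct_smul, RCLike.re_to_real, smul_eq_mul] at h
    have hq : x ⬝ᵥ (Φᵀ * (P + M) * Φ) *ᵥ x
        = (Φ.mulVec x) ⬝ᵥ (P + M).mulVec (Φ.mulVec x) := by
      rw [← mulVec_mulVec, ← mulVec_mulVec, dotProduct_mulVec, vecMul_transpose]
    rw [hq] at h
    linarith
  -- Part 2: Schur complement gives eigenvalue bound
  have h2' : (Matrix.fromBlocks M P Pᴴ
      ((γ / χ) • (1 : Matrix (Fin n) (Fin n) ℝ) - P)).PosSemidef := by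
    rwa [hP.1]
  have hS := (Matrix.PosDef.fromBlocks₁₁ P _ hM).mp h2'
  have hS' : ((γ / χ) • (1 : Matrix (Fin n) (Fin n) ℝ)
      - (P * M⁻¹ * P + P)).PosSemidef := by
    have : (γ / χ) • (1 : Matrix (Fin n) (Fin n) ℝ) - P - Pᴴ * M⁻¹ * P
        = (γ / χ) • (1 : Matrix (Fin n) (Fin n) ℝ) - (P * M⁻¹ * P + P) := by
      rw [hP.1, sub_sub, add_comm]
    rwa [this] at hS
  have hEig : ∀ i, hH.eigenvalues i ≤ γ / χ := by
    intro i
    have hv1 : (⇑(hH.eigenvectorBasis i) : Fin n → ℝ) ⬝ᵥ ⇑(hH.eigenvectorBasis i) = 1 := by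
      have hnorm := hH.eigenvectorBasis.orthonormal.1 i
      have h2 := real_inner_self_eq_norm_sq (hH.eigenvectorBasis i)
      rw [hnorm] at h2
      simp only [PiLp.inner_apply, RCLike.inner_apply, conj_trivial, one_pow] at h2
      simpa only [dotProduct, mul_comm] using h2
    have h := hS'.dotProduct_mulVec_nonneg ⇑(hH.eigenvectorBasis i)
    rw [sub_mulVec, smul_mulVec, one_mulVec, hH.mulVec_eigenvectorBasis] at h
    simp only [star_trivial, dotProduct_sub, dotProduct_smul, RCLike.re_to_real,
      smul_eq_mul, hv1, mul_one] at h
    linarith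
  have hsup : (⨆ i, hH.eigenvalues i) ≤ γ / χ := ciSup_le hEig
  have : χ * (⨆ i, hH.eigenvalues i) ≤ γ := by
    calc χ * (⨆ i, hH.eigenvalues i) ≤ χ * (γ / χ) := by
          exact mul_le_mul_of_nonneg_left hsup hχ.le
      _ = γ := by field_simp
  linarith
end

section
/- Let n ≥ 1, let P and M be real symmetric positive definite n×n matrices, γ > 0, ρ ∈ (0,1), θ ≥ 0, C' ≥ 0, ϖ ≥ 0. Let (x_k)_{k∈ℕ} in ℝ^n, (Φ_k)_{k∈ℕ} real n×n matrices and (w_k)_{k∈ℕ} in ℝ^n satisfy x_{k+1} = Φ_k x_k + w_k for all k. Suppose: (a) whenever x_kᵀ P x_k > 1, one has ‖w_k‖ ≤ θ and −x_kᵀ Φ_kᵀ (P + M) Φ_k x_k + (ρ − γ)·x_kᵀ P x_k − θ² λ_max(P M⁻¹ P + P) + γ ≥ 0; (b) whenever x_kᵀ P x_k ≤ 1, one has ‖Φ_k‖ ≤ C' and ‖w_k‖ ≤ ϖ. Then, with μ = max(1, λ_max(P)·(C'/√(λ_min(P)) + ϖ)²), there exists K ∈ ℕ such that x_kᵀ P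 x_k ≤ μ for all k ≥ K; i.e., the trajectory converges to and remains in the ellipsoid E(P, μ). -/
open Matrix

lemma dot_eq_inner' {n : ℕ} (x y : Fin n → ℝ) : x ⬝ᵥ y = inner ℝ (toE x) (toE y) := by
  simp [dotProduct, toE, PiLp.inner_apply, RCLike.inner_apply, mul_comm]

lemma symm_dot' {n : ℕ} {A : Matrix (Fin n) (Fin n) ℝ} (hA : A.IsHermitian) (x y : Fin n → ℝ) :
    x ⬝ᵥ A *ᵥ y = y ⬝ᵥ A *ᵥ x := by
  simp only [dotProduct, mulVec, Finset.mul_sum]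
  rw [Finset.sum_comm]
  apply Finset.sum_congr rfl; intro i _; apply Finset.sum_congr rfl; intro j _
  have h := congrFun (congrFun hA i) j
  simp only [conjTranspose_apply, star_trivial] at h
  rw [← h]; ring

lemma quad_eq' {n : ℕ} {A : Matrix (Fin n) (Fin n) ℝ} (hA : A.IsHermitian)
    (v : EuclideanSpace ℝ (Fin n)) :
    v ⬝ᵥ A.mulVec v = ∑ i, hA.eigenvalues i * (inner ℝ (hA.eigenvectorBasis i) v : ℝ)^2 := by
  have h1 : (v : Fin n → ℝ) ⬝ᵥ A.mulVec v = inner ℝ v (toE (A.mulVec v)) := dot_eq_inner' _ _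
  have hsym := (Matrix.isHermitian_iff_isSymmetric.1 hA)
  have h2 : toE (A.mulVec v) = Matrix.toEuclideanLin A v := by
    simp [toE, Matrix.toEuclideanLin_apply]
  rw [h1, h2]
  rw [← OrthonormalBasis.sum_inner_mul_inner hA.eigenvectorBasis v (Matrix.toEuclideanLin A v)]
  apply Finset.sum_congr rfl
  intro i _
  have h3 : inner ℝ (hA.eigenvectorBasis i) (Matrix.toEuclideanLin A v)
      = (hA.eigenvalues i) * (inner ℝ (hA.eigenvectorBasis i) v : ℝ) := by
    rw [← hsym (hA.eigenvectorBasis i) v]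
    have h4 : Matrix.toEuclideanLin A (hA.eigenvectorBasis i)
        = (hA.eigenvalues i : ℝ) • (hA.eigenvectorBasis i) := by
      apply (WithLp.equiv 2 (Fin n → ℝ)).injective
      simpa [Matrix.toEuclideanLin_apply] using hA.mulVec_eigenvectorBasis i
    rw [h4, inner_smul_left]
    simp
  rw [h3]
  have h5 : (inner ℝ (hA.eigenvectorBasis i) v : ℝ) = inner ℝ v (hA.eigenvectorBasis i) :=
    real_inner_comm _ _
  rw [h5]; ring

lemma norm_sq_eq' {n : ℕ} (b : OrthonormalBasis (Fin n) ℝ (EuclideanSpace ℝ (Fin n)))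
    (v : EuclideanSpace ℝ (Fin n)) : ‖v‖^2 = ∑ i, (inner ℝ (b i) v : ℝ)^2 := by
  have h := b.sum_inner_mul_inner v v
  rw [← real_inner_self_eq_norm_sq, ← h]
  apply Finset.sum_congr rfl
  intro i _
  rw [real_inner_comm v (b i)]
  ring

lemma quad_le' {n : ℕ} {A : Matrix (Fin n) (Fin n) ℝ} (hA : A.IsHermitian)
    (v : EuclideanSpace ℝ (Fin n)) :
    v ⬝ᵥ A.mulVec v ≤ (⨆ i, hA.eigenvalues i) * ‖v‖^2 := by
  rw [quad_eq' hA v, norm_sq_eq' hA.eigenvectorBasis v, Finset.mul_sum]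
  apply Finset.sum_le_sum
  intro i _
  exact mul_le_mul_of_nonneg_right
    (le_ciSup (Set.Finite.bddAbove (Set.finite_range _)) i) (sq_nonneg _)

lemma quad_ge' {n : ℕ} {A : Matrix (Fin n) (Fin n) ℝ} (hA : A.IsHermitian)
    (v : EuclideanSpace ℝ (Fin n)) :
    (⨅ i, hA.eigenvalues i) * ‖v‖^2 ≤ v ⬝ᵥ A.mulVec v := by
  rw [quad_eq' hA v, norm_sq_eq' hA.eigenvectorBasis v, Finset.mul_sum]
  apply Finset.sum_le_sum
  intro i _
  exact mul_le_mul_of_nonneg_right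
    (ciInf_le (Set.Finite.bddBelow (Set.finite_range _)) i) (sq_nonneg _)

lemma young' {n : ℕ} {P M : Matrix (Fin n) (Fin n) ℝ} (hP : P.IsHermitian) (hM : M.PosDef)
    (a w : Fin n → ℝ) :
    2 * (w ⬝ᵥ P *ᵥ a) ≤ a ⬝ᵥ M *ᵥ a + w ⬝ᵥ (P * M⁻¹ * P) *ᵥ w := by
  have hMM : M⁻¹ *ᵥ (M *ᵥ a) = a := by
    rw [mulVec_mulVec, nonsing_inv_mul _ (isUnit_iff_isUnit_det _ |>.1 hM.isUnit), one_mulVec]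
  have hMi : (M⁻¹).PosSemidef := hM.posSemidef.inv
  have h0 : 0 ≤ (M *ᵥ a - P *ᵥ w) ⬝ᵥ M⁻¹ *ᵥ (M *ᵥ a - P *ᵥ w) := by
    simpa using hMi.re_dotProduct_nonneg (M *ᵥ a - P *ᵥ w)
  have hexp : (M *ᵥ a - P *ᵥ w) ⬝ᵥ M⁻¹ *ᵥ (M *ᵥ a - P *ᵥ w)
      = a ⬝ᵥ M *ᵥ a - 2 * (w ⬝ᵥ P *ᵥ a) + w ⬝ᵥ (P * M⁻¹ * P) *ᵥ w := by
    rw [mulVec_sub, sub_dotProduct, dotProduct_sub, dotProduct_sub, hMM]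
    have e1 : (M *ᵥ a) ⬝ᵥ a = a ⬝ᵥ M *ᵥ a := dotProduct_comm _ _
    have e2 : (M *ᵥ a) ⬝ᵥ (M⁻¹ *ᵥ (P *ᵥ w)) = w ⬝ᵥ P *ᵥ a := by
      rw [symm_dot' hMi.1 (M *ᵥ a) (P *ᵥ w), hMM, dotProduct_comm,
        symm_dot' hP a w]
    have e3 : (P *ᵥ w) ⬝ᵥ a = w ⬝ᵥ P *ᵥ a := by
      rw [dotProduct_comm, symm_dot' hP a w]
    have e4 : (P *ᵥ w) ⬝ᵥ (M⁻¹ *ᵥ (P *ᵥ w)) = w ⬝ᵥ (P * M⁻¹ * P) *ᵥ w := by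
      rw [dotProduct_comm, symm_dot' hP (M⁻¹ *ᵥ (P *ᵥ w)) w, mulVec_mulVec, mulVec_mulVec]
    rw [e1, e2, e3, e4]; ring
  linarith [hexp ▸ h0]

/-- Proposition 3 (online self-triggering mechanism, perturbed case), trajectory level:
outside the unit ellipsoid the triggering condition with decay `ρ` and disturbance
bound `θ` holds, inside it the sensor-free transition (`‖Φ_k‖ ≤ C'`, `‖w_k‖ ≤ ϖ`)
is applied; then the trajectory converges to and remains in `E(P, μ)` with
`μ = max(1, λ_max(P)(C'/√(λ_min(P)) + ϖ)²)` — global uniform ultimate boundedness. -/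
theorem stmt13 (n : ℕ) (hn : 1 ≤ n) (P M : Matrix (Fin n) (Fin n) ℝ)
    (hP : P.PosDef) (hM : M.PosDef)
    (γ ρ θ C' ϖ : ℝ) (hγ : 0 < γ) (hρ : ρ ∈ Set.Ioo (0 : ℝ) 1) (hθ : 0 ≤ θ)
    (hC' : 0 ≤ C') (hϖ : 0 ≤ ϖ)
    (hH : (P * M⁻¹ * P + P).IsHermitian)
    (x : ℕ → EuclideanSpace ℝ (Fin n)) (Φ : ℕ → Matrix (Fin n) (Fin n) ℝ)
    (w : ℕ → EuclideanSpace ℝ (Fin n))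
    (hdyn : ∀ k, x (k + 1) = toE ((Φ k).mulVec (x k)) + w k)
    (ha : ∀ k, 1 < x k ⬝ᵥ P.mulVec (x k) → ‖w k‖ ≤ θ ∧
      0 ≤ -(((Φ k).mulVec (x k)) ⬝ᵥ (P + M).mulVec ((Φ k).mulVec (x k)))
        + (ρ - γ) * (x k ⬝ᵥ P.mulVec (x k)) - θ ^ 2 * (⨆ i, hH.eigenvalues i) + γ)
    (hb : ∀ k, x k ⬝ᵥ P.mulVec (x k) ≤ 1 →
      ‖Matrix.toEuclideanCLM (𝕜 := ℝ) (Φ k)‖ ≤ C' ∧ ‖w k‖ ≤ ϖ) :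
    ∃ K : ℕ, ∀ k ≥ K, x k ⬝ᵥ P.mulVec (x k) ≤
      max 1 ((⨆ i, hP.1.eigenvalues i) *
        (C' / Real.sqrt (⨅ i, hP.1.eigenvalues i) + ϖ) ^ 2) := by
  haveI : Nonempty (Fin n) := ⟨⟨0, hn⟩⟩
  have i0 : Fin n := ⟨0, hn⟩
  set V : ℕ → ℝ := fun k => x k ⬝ᵥ P.mulVec (x k) with hV
  set lm : ℝ := ⨅ i, hP.1.eigenvalues i with hlm
  set lM : ℝ := ⨆ i, hP.1.eigenvalues i with hlM
  set lH : ℝ := ⨆ i, hH.eigenvalues i with hlH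
  set B : ℝ := C' / Real.sqrt lm + ϖ with hB
  set μ : ℝ := max 1 (lM * B ^ 2) with hμ
  -- eigenvalue positivity facts
  have hlm_pos : 0 < lm := by
    obtain ⟨j, hj⟩ := Finite.exists_min hP.1.eigenvalues
    exact lt_of_lt_of_le (hP.eigenvalues_pos j) (le_ciInf hj)
  have hlM_pos : 0 < lM := lt_of_lt_of_le (hP.eigenvalues_pos i0)
    (le_ciSup (Set.Finite.bddAbove (Set.finite_range _)) i0)
  have hlH_nonneg : 0 ≤ lH := by
    have hpsd : (P * M⁻¹ * P + P).PosSemidef := by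
      have h1 : (P * M⁻¹ * P).PosSemidef := by
        have := hM.posSemidef.inv.conjTranspose_mul_mul_same P
        rwa [hP.1.eq] at this
      exact h1.add hP.posSemidef
    exact le_trans (hpsd.eigenvalues_nonneg i0)
      (le_ciSup (Set.Finite.bddAbove (Set.finite_range _)) i0)
  have hB_nonneg : 0 ≤ B := by
    rw [hB]
    positivity
  -- decay outside the unit ellipsoid
  have hdecay : ∀ k, 1 < V k → V (k + 1) ≤ ρ * V k := by
    intro k hk
    obtain ⟨hwθ, hquad⟩ := ha k hk
    set a : Fin n → ℝ := (Φ k).mulVec (x k) with hav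
    set wv : Fin n → ℝ := (w k : Fin n → ℝ) with hwv
    have hstep : V (k + 1) = a ⬝ᵥ P *ᵥ a + 2 * (wv ⬝ᵥ P *ᵥ a) + wv ⬝ᵥ P *ᵥ wv := by
      show x (k+1) ⬝ᵥ P.mulVec (x (k+1)) = _
      rw [hdyn k]
      show (a + wv) ⬝ᵥ P *ᵥ (a + wv) = _
      rw [mulVec_add, add_dotProduct, dotProduct_add, dotProduct_add]
      have e1 : a ⬝ᵥ P *ᵥ wv = wv ⬝ᵥ P *ᵥ a := symm_dot' hP.1 a wv
      rw [e1]; ring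
    have hyoung := young' hP.1 hM a wv
    have hHle : wv ⬝ᵥ (P * M⁻¹ * P + P) *ᵥ wv ≤ lH * θ ^ 2 := by
      calc wv ⬝ᵥ (P * M⁻¹ * P + P) *ᵥ wv ≤ lH * ‖w k‖ ^ 2 := quad_le' hH (w k)
        _ ≤ lH * θ ^ 2 := mul_le_mul_of_nonneg_left
            (pow_le_pow_left₀ (norm_nonneg _) hwθ 2) hlH_nonneg
    have hsplit : wv ⬝ᵥ (P * M⁻¹ * P + P) *ᵥ wv
        = wv ⬝ᵥ (P * M⁻¹ * P) *ᵥ wv + wv ⬝ᵥ P *ᵥ wv := by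
      rw [add_mulVec, dotProduct_add]
    have hsplit2 : a ⬝ᵥ (P + M) *ᵥ a = a ⬝ᵥ P *ᵥ a + a ⬝ᵥ M *ᵥ a := by
      rw [add_mulVec, dotProduct_add]
    have hVeq : x k ⬝ᵥ P.mulVec (x k) = V k := rfl
    rw [hVeq] at hquad
    nlinarith [hquad, hstep, hyoung, hHle, hsplit, hsplit2,
      mul_nonneg hγ.le (sub_nonneg.2 hk.le)]
  -- one step from inside the unit ellipsoid
  have hinside : ∀ k, V k ≤ 1 → V (k + 1) ≤ lM * B ^ 2 := by
    intro k hk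
    obtain ⟨hΦ, hwϖ⟩ := hb k hk
    have hxk : ‖x k‖ ≤ 1 / Real.sqrt lm := by
      have h1 : lm * ‖x k‖ ^ 2 ≤ V k := quad_ge' hP.1 (x k)
      have h2 : ‖x k‖ ^ 2 ≤ 1 / lm := by
        rw [le_div_iff₀ hlm_pos]; nlinarith
      calc ‖x k‖ = Real.sqrt (‖x k‖ ^ 2) := (Real.sqrt_sq (norm_nonneg _)).symm
        _ ≤ Real.sqrt (1 / lm) := Real.sqrt_le_sqrt h2
        _ = 1 / Real.sqrt lm := by rw [one_div, Real.sqrt_inv, one_div]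
    have hCLM : toE ((Φ k).mulVec (x k)) = Matrix.toEuclideanCLM (𝕜 := ℝ) (Φ k) (x k) := by
      simpa [toE] using
        (Matrix.toEuclideanCLM_toLp (𝕜 := ℝ) (Φ k)
          ((WithLp.equiv 2 (Fin n → ℝ)) (x k))).symm
    have hnormstep : ‖x (k + 1)‖ ≤ B := by
      rw [hdyn k, hCLM]
      calc ‖Matrix.toEuclideanCLM (𝕜 := ℝ) (Φ k) (x k) + w k‖
          ≤ ‖Matrix.toEuclideanCLM (𝕜 := ℝ) (Φ k) (x k)‖ + ‖w k‖ := norm_add_le _ _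
        _ ≤ ‖Matrix.toEuclideanCLM (𝕜 := ℝ) (Φ k)‖ * ‖x k‖ + ϖ := by
            have := (Matrix.toEuclideanCLM (𝕜 := ℝ) (Φ k)).le_opNorm (x k)
            linarith
        _ ≤ C' * (1 / Real.sqrt lm) + ϖ := by
            have h2 : ‖Matrix.toEuclideanCLM (𝕜 := ℝ) (Φ k)‖ * ‖x k‖ ≤ C' * (1 / Real.sqrt lm) :=
              mul_le_mul hΦ hxk (norm_nonneg _) hC'
            linarith
        _ = B := by rw [hB]; ring
    calc V (k + 1) ≤ lM * ‖x (k + 1)‖ ^ 2 := quad_le' hP.1 (x (k + 1))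
      _ ≤ lM * B ^ 2 := mul_le_mul_of_nonneg_left
          (pow_le_pow_left₀ (norm_nonneg _) hnormstep 2) hlM_pos.le
  -- invariance of E(P, μ)
  have hinv : ∀ k, V k ≤ μ → V (k + 1) ≤ μ := by
    intro k hk
    by_cases h1 : V k ≤ 1
    · exact le_trans (hinside k h1) (le_max_right _ _)
    · push_neg at h1
      have := hdecay k h1
      have : V (k + 1) ≤ V k := by nlinarith [hρ.2, h1]
      linarith
  -- existence of an entry time
  have hentry : ∃ K, V K ≤ μ := by
    by_cases hall : ∀ k, 1 < V k
    · exfalso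
      have hgeom : ∀ k, V k ≤ ρ ^ k * V 0 := by
        intro k
        induction k with
        | zero => simp
        | succ m ih =>
          calc V (m + 1) ≤ ρ * V m := hdecay m (hall m)
            _ ≤ ρ * (ρ ^ m * V 0) := mul_le_mul_of_nonneg_left ih hρ.1.le
            _ = ρ ^ (m + 1) * V 0 := by ring
      have hV0 : 0 < V 0 := lt_trans one_pos (hall 0)
      obtain ⟨N, hN⟩ := exists_pow_lt_of_lt_one (show (0:ℝ) < 1 / V 0 by positivity) hρ.2
      have : V N ≤ ρ ^ N * V 0 := hgeom N
      have : ρ ^ N * V 0 < (1 / V 0) * V 0 := by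
        exact mul_lt_mul_of_pos_right hN hV0
      rw [one_div_mul_cancel hV0.ne'] at this
      linarith [hall N, hgeom N]
    · push_neg at hall
      obtain ⟨K, hK⟩ := hall
      exact ⟨K, le_trans hK (le_max_left _ _)⟩
  obtain ⟨K, hK⟩ := hentry
  refine ⟨K, ?_⟩
  intro k hk
  induction k, hk using Nat.le_induction with
  | base => exact hK
  | succ m hm ih => exact hinv m ih
end

section
/- Let n ≥ 1, let P be a real symmetric positive definite n×n matrix, Φ a real n×n matrix, and γ₁ > 0, γ₂ > 0, ρ > 0, θ > 0. Suppose the symmetric (2n+1)×(2n+1) block matrix U = [[−Φᵀ P Φ + (ρ − γ₁)P, −Φᵀ P, 0], [−P Φ, (γ₂/θ)I − P, 0], [0, 0, γ₁ − γ₂]] is positive semidefinite. Then for every x ∈ ℝ^n with xᵀ P x ≥ 1 and every w ∈ ℝ^n with ‖w‖² ≤ θ, one has (Φx + w)ᵀ P (Φx + w) ≤ ρ · xᵀ P x. -/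
open Matrix

/-- S-procedure per-step claim in the proof of Proposition 4: positive semidefiniteness
of the `(2n+1)×(2n+1)` block matrix `U` implies the per-step Lyapunov decrease
`(Φx + w)ᵀ P (Φx + w) ≤ ρ xᵀ P x` for all `x` with `xᵀ P x ≥ 1` and all `w` with
`‖w‖² ≤ θ`. -/
theorem stmt14 (n : ℕ) (hn : 1 ≤ n) (P Φ : Matrix (Fin n) (Fin n) ℝ) (hP : P.PosDef)
    (γ₁ γ₂ ρ θ : ℝ) (hγ₁ : 0 < γ₁) (hγ₂ : 0 < γ₂) (hρ : 0 < ρ) (hθ : 0 < θ)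
    (hU : (Matrix.fromBlocks
        (Matrix.fromBlocks (-(Φᵀ * P * Φ) + (ρ - γ₁) • P) (-(Φᵀ * P))
          (-(P * Φ)) ((γ₂ / θ) • (1 : Matrix (Fin n) (Fin n) ℝ) - P))
        0 0 ((γ₁ - γ₂) • (1 : Matrix Unit Unit ℝ))).PosSemidef) :
    ∀ x w : EuclideanSpace ℝ (Fin n), 1 ≤ x ⬝ᵥ P.mulVec x → ‖w‖ ^ 2 ≤ θ →
      (toE (Φ.mulVec x) + w) ⬝ᵥ P.mulVec (toE (Φ.mulVec x) + w) ≤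
        ρ * (x ⬝ᵥ P.mulVec x) := by
  intro x w hx hw
  have hPt : Pᵀ = P := by simpa [Matrix.IsSymm] using hP.1
  have hz := hU.dotProduct_mulVec_nonneg (Sum.elim (Sum.elim (x : Fin n → ℝ) (w : Fin n → ℝ)) (fun _ => (1:ℝ)))
  have hwn : (w : Fin n → ℝ) ⬝ᵥ (w : Fin n → ℝ) = ‖w‖ ^ 2 := by
    rw [← real_inner_self_eq_norm_sq]
    simp [dotProduct, PiLp.inner_apply, RCLike.inner_apply, mul_comm]
    rw [EuclideanSpace.real_norm_sq_eq]
    simp [sq]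
  simp only [star_trivial, Matrix.fromBlocks_mulVec, sumElim_dotProduct_sumElim,
    Sum.elim_comp_inl, Sum.elim_comp_inr,
    Matrix.zero_mulVec, Matrix.add_mulVec, Matrix.sub_mulVec, Matrix.neg_mulVec,
    Matrix.smul_mulVec, Matrix.one_mulVec, add_zero, zero_add,
    dotProduct_add, dotProduct_neg, dotProduct_smul, dotProduct_sub, smul_eq_mul] at hz
  have h1 : (x : Fin n → ℝ) ⬝ᵥ (Φᵀ * P * Φ) *ᵥ x = Φ *ᵥ x ⬝ᵥ P *ᵥ (Φ *ᵥ x) := by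
    rw [← Matrix.mulVec_mulVec, ← Matrix.mulVec_mulVec, Matrix.dotProduct_mulVec,
      Matrix.vecMul_transpose]
  have h2 : (x : Fin n → ℝ) ⬝ᵥ (Φᵀ * P) *ᵥ w = Φ *ᵥ x ⬝ᵥ P *ᵥ w := by
    rw [← Matrix.mulVec_mulVec, Matrix.dotProduct_mulVec, Matrix.vecMul_transpose]
  have h3 : (w : Fin n → ℝ) ⬝ᵥ (P * Φ) *ᵥ x = w ⬝ᵥ P *ᵥ (Φ *ᵥ x) := by
    rw [← Matrix.mulVec_mulVec]
  have hsym : Φ *ᵥ x ⬝ᵥ P *ᵥ w = (w : Fin n → ℝ) ⬝ᵥ P *ᵥ (Φ *ᵥ x) := by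
    rw [Matrix.dotProduct_mulVec]
    conv_lhs => rw [← hPt]
    rw [Matrix.vecMul_transpose, dotProduct_comm]
  have hexp : (toE (Φ.mulVec x) + w) ⬝ᵥ P.mulVec (toE (Φ.mulVec x) + w)
      = Φ *ᵥ x ⬝ᵥ P *ᵥ (Φ *ᵥ x) + 2 * ((w : Fin n → ℝ) ⬝ᵥ P *ᵥ (Φ *ᵥ x)) + w ⬝ᵥ P *ᵥ w := by
    have hW : (WithLp.equiv 2 (Fin n → ℝ) w) = w := rfl
    have hv : toE (Φ.mulVec x) + w = (Φ *ᵥ x) + (WithLp.equiv 2 (Fin n → ℝ) w) := rfl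
    rw [WithLp.ofLp_add, hv, hW, Matrix.mulVec_add, dotProduct_add, add_dotProduct, add_dotProduct, hsym]
    ring
  have hg : (γ₂ / θ) * ‖w‖ ^ 2 ≤ γ₂ := by
    calc (γ₂ / θ) * ‖w‖ ^ 2 ≤ (γ₂ / θ) * θ :=
          mul_le_mul_of_nonneg_left hw (le_of_lt (div_pos hγ₂ hθ))
      _ = γ₂ := by field_simp
  have hone : ((fun _ => (1:ℝ)) : Unit → ℝ) ⬝ᵥ (fun _ => (1:ℝ)) = 1 := by
    simp [dotProduct]
  rw [hone, mul_one] at hz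
  rw [hexp]
  rw [h1, h2, h3, hwn] at hz
  have k1 : γ₁ * 1 ≤ γ₁ * (x ⬝ᵥ P *ᵥ x) := mul_le_mul_of_nonneg_left hx (le_of_lt hγ₁)
  nlinarith [hz, hsym, hg, k1]
end

section
/- Let n ≥ 1, let P and Q be real symmetric n×n matrices with P positive definite, Φ a real n×n matrix, and γ₁ > 0, γ₂ > 0, ρ > 0, θ > 0, ε > 0. Suppose the symmetric (2n+1)×(2n+1) block matrix U_c = [[−Φᵀ P Φ + (ρ − γ₁)P − εQ, −Φᵀ P, 0], [−P Φ, (γ₂/θ)I − P, 0], [0, 0, γ₁ − γ₂]] is positive semidefinite. Then for every x ∈ ℝ^n with xᵀ Q x ≥ 0 and xᵀ P x ≥ 1, and every w ∈ ℝ^n with ‖w‖² ≤ θ, one has (Φx + w)ᵀ P (Φx + w) ≤ ρ · xᵀ P x. -/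
open Matrix

/-- Region-wise S-procedure step in the proof of Proposition 4: positive semidefiniteness
of the `(2n+1)×(2n+1)` block matrix `U_c` (with conic-region multiplier `ε`) implies the
per-step Lyapunov decrease for all states of the region outside the unit ellipsoid and
all disturbances with `‖w‖² ≤ θ`. -/
theorem stmt15 (n : ℕ) (hn : 1 ≤ n) (P Q Φ : Matrix (Fin n) (Fin n) ℝ)
    (hP : P.PosDef) (hQ : Q.IsSymm)
    (γ₁ γ₂ ρ θ ε : ℝ) (hγ₁ : 0 < γ₁) (hγ₂ : 0 < γ₂) (hρ : 0 < ρ) (hθ : 0 < θ)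
    (hε : 0 < ε)
    (hU : (Matrix.fromBlocks
        (Matrix.fromBlocks (-(Φᵀ * P * Φ) + (ρ - γ₁) • P - ε • Q) (-(Φᵀ * P))
          (-(P * Φ)) ((γ₂ / θ) • (1 : Matrix (Fin n) (Fin n) ℝ) - P))
        0 0 ((γ₁ - γ₂) • (1 : Matrix Unit Unit ℝ))).PosSemidef) :
    ∀ x w : EuclideanSpace ℝ (Fin n),
      0 ≤ x ⬝ᵥ Q.mulVec x → 1 ≤ x ⬝ᵥ P.mulVec x → ‖w‖ ^ 2 ≤ θ →
      (toE (Φ.mulVec x) + w) ⬝ᵥ P.mulVec (toE (Φ.mulVec x) + w) ≤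
        ρ * (x ⬝ᵥ P.mulVec x) := by
  intro x w hx hx1 hw
  set z : (Fin n ⊕ Fin n) ⊕ Unit → ℝ := Sum.elim (Sum.elim x w) (fun _ => 1) with hz
  have h0 := hU.dotProduct_mulVec_nonneg z
  simp only [star_trivial, fromBlocks_mulVec, dotProduct_block, hz] at h0
  simp only [Sum.elim_comp_inl, Sum.elim_comp_inr, zero_mulVec, add_zero, zero_add,
    sub_mulVec, add_mulVec, neg_mulVec, smul_mulVec, one_mulVec,
    dotProduct_add, dotProduct_sub, dotProduct_neg, dotProduct_smul, smul_eq_mul] at h0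
  have hww : w ⬝ᵥ w = ‖w‖ ^ 2 := by
    rw [← real_inner_self_eq_norm_sq]; rfl
  have h1 : ((fun _ : Unit => (1:ℝ)) ⬝ᵥ fun _ => 1) = 1 := by
    simp [dotProduct]
  rw [h1] at h0
  have hPs : Pᵀ = P := hP.isHermitian
  have e1 : x ⬝ᵥ (Φᵀ * P * Φ) *ᵥ x = (Φ *ᵥ x) ⬝ᵥ P *ᵥ (Φ *ᵥ x) := by
    rw [← mulVec_mulVec, ← mulVec_mulVec, dotProduct_mulVec, vecMul_transpose]
  have e2 : x ⬝ᵥ (Φᵀ * P) *ᵥ w = (Φ *ᵥ x) ⬝ᵥ P *ᵥ w := by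
    rw [← mulVec_mulVec, dotProduct_mulVec, vecMul_transpose]
  have e4 : ∀ u : Fin n → ℝ, w ⬝ᵥ P *ᵥ u = u ⬝ᵥ P *ᵥ w := by
    intro u
    rw [dotProduct_mulVec, ← Matrix.mulVec_transpose, hPs, dotProduct_comm]
  have e3 : w ⬝ᵥ (P * Φ) *ᵥ x = (Φ *ᵥ x) ⬝ᵥ P *ᵥ w := by
    rw [← mulVec_mulVec, e4]
  rw [e1, e2, e3] at h0
  have egoal : (toE (Φ *ᵥ x) + w) ⬝ᵥ P *ᵥ (toE (Φ *ᵥ x) + w)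
      = (Φ *ᵥ x) ⬝ᵥ P *ᵥ (Φ *ᵥ x) + 2 * ((Φ *ᵥ x) ⬝ᵥ P *ᵥ w) + w ⬝ᵥ P *ᵥ w := by
    have w' : Fin n → ℝ := w
    have hc : toE (Φ *ᵥ x) + w = (Φ *ᵥ x) + (id w : Fin n → ℝ) := rfl
    have hc2 : ((toE (Φ *ᵥ x) + w : EuclideanSpace ℝ (Fin n)) : Fin n → ℝ)
        = (Φ *ᵥ x) + (id w : Fin n → ℝ) := rfl
    rw [hc, hc2, add_dotProduct, mulVec_add, dotProduct_add, dotProduct_add]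
    simp only [id] at *
    rw [e4]
    ring
  rw [egoal]
  have hwθ : w ⬝ᵥ w ≤ θ := by rw [hww]; exact hw
  have hγ2θ : 0 < γ₂ / θ := div_pos hγ₂ hθ
  nlinarith [mul_nonneg hε.le hx, mul_le_mul_of_nonneg_left hwθ hγ2θ.le,
    div_mul_cancel₀ γ₂ hθ.ne']
end

section
/- Let n ≥ 1, let P be a real symmetric positive definite n×n matrix, let Q_1, …, Q_N be real symmetric n×n matrices, and let γ₁ > 0, γ₂ > 0, ρ ∈ (0,1), θ > 0, C' ≥ 0, ϖ ≥ 0. Let (x_k)_{k∈ℕ} in ℝ^n, (Φ_k)_{k∈ℕ} real n×n matrices and (w_k)_{k∈ℕ} in ℝ^n satisfy x_{k+1} = Φ_k x_k + w_k. Suppose: (a) whenever x_kᵀ P x_k > 1, one has ‖w_k‖² ≤ θ and there exist c ∈ {1,…,N} and ε > 0 with x_kᵀ Q_c x_k ≥ 0 such that the symmetric block matrix [[−Φ_kᵀ P Φ_k + (ρ − γ₁)P − εQ_c, −Φ_kᵀ P, 0], [−P Φ_k, (γ₂/θ)I − P, 0], [0, 0, γ₁ − γ₂]] is positive semidefinite;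 (b) whenever x_kᵀ P x_k ≤ 1, one has ‖Φ_k‖ ≤ C' and ‖w_k‖ ≤ ϖ. Then, with μ = max(1, λ_max(P)·(C'/√(λ_min(P)) + ϖ)²), there exists K ∈ ℕ such that x_kᵀ P x_k ≤ μ for all k ≥ K; i.e., the trajectory converges to and remains in the ellipsoid E(P, μ). -/
open Matrix

private lemma psd_smul_sub {n : ℕ} {P : Matrix (Fin n) (Fin n) ℝ} (hP : P.IsHermitian) {c : ℝ}
    (hc : ∀ i, hP.eigenvalues i ≤ c) :
    (c • (1 : Matrix (Fin n) (Fin n) ℝ) - P).PosSemidef := by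
  have hU : (hP.eigenvectorUnitary : Matrix (Fin n) (Fin n) ℝ) *
      star (hP.eigenvectorUnitary : Matrix (Fin n) (Fin n) ℝ) = 1 :=
    (Matrix.mem_unitaryGroup_iff).mp hP.eigenvectorUnitary.2
  have key : c • (1 : Matrix (Fin n) (Fin n) ℝ) - P =
      (hP.eigenvectorUnitary : Matrix (Fin n) (Fin n) ℝ) *
        diagonal (fun i => c - hP.eigenvalues i) *
        star (hP.eigenvectorUnitary : Matrix (Fin n) (Fin n) ℝ) := by
    conv_lhs => rw [hP.spectral_theorem, Unitary.conjStarAlgAut_apply]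
    have h1 : (diagonal (fun i => c - hP.eigenvalues i) : Matrix (Fin n) (Fin n) ℝ)
        = c • 1 - diagonal (RCLike.ofReal ∘ hP.eigenvalues) := by
      rw [smul_one_eq_diagonal, diagonal_sub]
      rfl
    rw [h1, Matrix.mul_sub, Matrix.sub_mul, Matrix.mul_smul, Matrix.smul_mul, mul_one, hU]
  rw [key]
  exact (Matrix.posSemidef_diagonal_iff.mpr
    (fun i => sub_nonneg.mpr (hc i))).mul_mul_conjTranspose_same _

private lemma psd_sub_smul {n : ℕ} {P : Matrix (Fin n) (Fin n) ℝ} (hP : P.IsHermitian) {c : ℝ}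
    (hc : ∀ i, c ≤ hP.eigenvalues i) :
    (P - c • (1 : Matrix (Fin n) (Fin n) ℝ)).PosSemidef := by
  have hU : (hP.eigenvectorUnitary : Matrix (Fin n) (Fin n) ℝ) *
      star (hP.eigenvectorUnitary : Matrix (Fin n) (Fin n) ℝ) = 1 :=
    (Matrix.mem_unitaryGroup_iff).mp hP.eigenvectorUnitary.2
  have key : P - c • (1 : Matrix (Fin n) (Fin n) ℝ) =
      (hP.eigenvectorUnitary : Matrix (Fin n) (Fin n) ℝ) *
        diagonal (fun i => hP.eigenvalues i - c) *
        star (hP.eigenvectorUnitary : Matrix (Fin n) (Fin n) ℝ) := by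
    conv_lhs => rw [hP.spectral_theorem, Unitary.conjStarAlgAut_apply]
    have h1 : (diagonal (fun i => hP.eigenvalues i - c) : Matrix (Fin n) (Fin n) ℝ)
        = diagonal (RCLike.ofReal ∘ hP.eigenvalues) - c • 1 := by
      rw [smul_one_eq_diagonal, diagonal_sub]
      rfl
    rw [h1, Matrix.mul_sub, Matrix.sub_mul, Matrix.mul_smul, Matrix.smul_mul, mul_one, hU]
  rw [key]
  exact (Matrix.posSemidef_diagonal_iff.mpr
    (fun i => sub_nonneg.mpr (hc i))).mul_mul_conjTranspose_same _

private lemma psd_quad_nonneg {n : ℕ} {M : Matrix (Fin n) (Fin n) ℝ} (h : M.PosSemidef)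
    (v : Fin n → ℝ) : 0 ≤ v ⬝ᵥ M.mulVec v := by
  simpa using h.dotProduct_mulVec_nonneg v

private lemma quad_upper {n : ℕ} {P : Matrix (Fin n) (Fin n) ℝ} (hP : P.IsHermitian) {c : ℝ}
    (hc : ∀ i, hP.eigenvalues i ≤ c) (v : Fin n → ℝ) :
    v ⬝ᵥ P.mulVec v ≤ c * (v ⬝ᵥ v) := by
  have h := psd_quad_nonneg (psd_smul_sub hP hc) v
  rw [Matrix.sub_mulVec, Matrix.smul_mulVec, Matrix.one_mulVec,
    dotProduct_sub, dotProduct_smul, smul_eq_mul] at h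
  linarith

private lemma quad_lower {n : ℕ} {P : Matrix (Fin n) (Fin n) ℝ} (hP : P.IsHermitian) {c : ℝ}
    (hc : ∀ i, c ≤ hP.eigenvalues i) (v : Fin n → ℝ) :
    c * (v ⬝ᵥ v) ≤ v ⬝ᵥ P.mulVec v := by
  have h := psd_quad_nonneg (psd_sub_smul hP hc) v
  rw [Matrix.sub_mulVec, Matrix.smul_mulVec, Matrix.one_mulVec,
    dotProduct_sub, dotProduct_smul, smul_eq_mul] at h
  linarith

private lemma dot_self_eq_norm_sq {n : ℕ} (v : EuclideanSpace ℝ (Fin n)) :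
    (v : Fin n → ℝ) ⬝ᵥ v = ‖v‖ ^ 2 := by
  rw [← real_inner_self_eq_norm_sq]
  simp only [PiLp.inner_apply, dotProduct, RCLike.inner_apply, conj_trivial, mul_comm]

private lemma lmi_ineq {n : ℕ} (P Qc Φ : Matrix (Fin n) (Fin n) ℝ) (γ₁ γ₂ ρ θ ε : ℝ)
    (a b : Fin n → ℝ)
    (hPSD : (Matrix.fromBlocks
          (Matrix.fromBlocks (-(Φᵀ * P * Φ) + (ρ - γ₁) • P - ε • Qc)
            (-(Φᵀ * P)) (-(P * Φ))
            ((γ₂ / θ) • (1 : Matrix (Fin n) (Fin n) ℝ) - P))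
          0 0 ((γ₁ - γ₂) • (1 : Matrix Unit Unit ℝ))).PosSemidef) :
    0 ≤ -((Φ *ᵥ a) ⬝ᵥ P *ᵥ (Φ *ᵥ a)) + (ρ - γ₁) * (a ⬝ᵥ P *ᵥ a) - ε * (a ⬝ᵥ Qc *ᵥ a)
      - (Φ *ᵥ a) ⬝ᵥ (P *ᵥ b) - b ⬝ᵥ P *ᵥ (Φ *ᵥ a) + (γ₂ / θ) * (b ⬝ᵥ b) - b ⬝ᵥ P *ᵥ b
      + (γ₁ - γ₂) := by
  have h := hPSD.dotProduct_mulVec_nonneg (Sum.elim (Sum.elim a b) (fun _ => (1:ℝ)))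
  simp only [star_trivial, RCLike.re_to_real] at h
  simp only [Matrix.fromBlocks_mulVec, Sum.elim_comp_inl, Sum.elim_comp_inr,
    Matrix.zero_mulVec, add_zero, zero_add,
    sumElim_dotProduct_sumElim] at h
  simp only [Matrix.zero_mulVec, add_zero, zero_add, Matrix.add_mulVec, Matrix.sub_mulVec,
    Matrix.neg_mulVec, Matrix.smul_mulVec, Matrix.one_mulVec,
    dotProduct_add, dotProduct_sub, dotProduct_neg,
    dotProduct_smul, smul_eq_mul, ← Matrix.mulVec_mulVec] at h
  have e1 : a ⬝ᵥ Φᵀ *ᵥ (P *ᵥ (Φ *ᵥ a)) = (Φ *ᵥ a) ⬝ᵥ (P *ᵥ (Φ *ᵥ a)) := by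
    rw [Matrix.dotProduct_mulVec, Matrix.vecMul_transpose]
  have e2 : a ⬝ᵥ Φᵀ *ᵥ (P *ᵥ b) = (Φ *ᵥ a) ⬝ᵥ (P *ᵥ b) := by
    rw [Matrix.dotProduct_mulVec, Matrix.vecMul_transpose]
  rw [e1, e2] at h
  have e3 : ((fun _ : Unit => (1:ℝ)) ⬝ᵥ fun _ => (1:ℝ)) = 1 := by
    simp [dotProduct]
  rw [e3, mul_one] at h
  linarith


private lemma decay_step {n : ℕ} {P Qc Φm : Matrix (Fin n) (Fin n) ℝ} {γ₁ γ₂ ρ θ ε : ℝ}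
    (hγ₁ : 0 < γ₁) (hγ₂ : 0 < γ₂) (hθ : 0 < θ) (hε : 0 < ε)
    {a b : Fin n → ℝ} (hk : 1 < a ⬝ᵥ P *ᵥ a) (hb2 : b ⬝ᵥ b ≤ θ)
    (hQx : 0 ≤ a ⬝ᵥ Qc *ᵥ a)
    (hPSD : (Matrix.fromBlocks
          (Matrix.fromBlocks (-(Φmᵀ * P * Φm) + (ρ - γ₁) • P - ε • Qc)
            (-(Φmᵀ * P)) (-(P * Φm))
            ((γ₂ / θ) • (1 : Matrix (Fin n) (Fin n) ℝ) - P))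
          0 0 ((γ₁ - γ₂) • (1 : Matrix Unit Unit ℝ))).PosSemidef) :
    (Φm *ᵥ a + b) ⬝ᵥ P *ᵥ (Φm *ᵥ a + b) ≤ ρ * (a ⬝ᵥ P *ᵥ a) := by
  have h := lmi_ineq P Qc Φm γ₁ γ₂ ρ θ ε a b hPSD
  rw [Matrix.mulVec_add, add_dotProduct, dotProduct_add, dotProduct_add]
  have hq : 0 ≤ ε * (a ⬝ᵥ Qc *ᵥ a) := mul_nonneg hε.le hQx
  have hw2 : (γ₂ / θ) * (b ⬝ᵥ b) ≤ γ₂ := by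
    have h1 : (γ₂ / θ) * (b ⬝ᵥ b) ≤ (γ₂ / θ) * θ :=
      mul_le_mul_of_nonneg_left hb2 (le_of_lt (div_pos hγ₂ hθ))
    rwa [div_mul_cancel₀ _ (ne_of_gt hθ)] at h1
  have hγV : γ₁ * 1 ≤ γ₁ * (a ⬝ᵥ P *ᵥ a) := mul_le_mul_of_nonneg_left hk.le hγ₁.le
  nlinarith [h, hq, hw2, hγV]

/-- Proposition 4 (offline self-triggering mechanism, perturbed case), trajectory level:
outside the unit ellipsoid the chosen horizon is certified by a region-wise
`(2n+1)×(2n+1)` S-procedure LMI; inside it the sensor-free transition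
(`‖Φ_k‖ ≤ C'`, `‖w_k‖ ≤ ϖ`) is applied. Then the trajectory converges to and remains
in `E(P, μ)` with `μ = max(1, λ_max(P)(C'/√(λ_min(P)) + ϖ)²)` — global uniform
ultimate boundedness. -/
theorem stmt16 (n N : ℕ) (hn : 1 ≤ n)
    (P : Matrix (Fin n) (Fin n) ℝ) (hP : P.PosDef)
    (Q : Fin N → Matrix (Fin n) (Fin n) ℝ) (hQ : ∀ c, (Q c).IsSymm)
    (γ₁ γ₂ ρ θ C' ϖ : ℝ) (hγ₁ : 0 < γ₁) (hγ₂ : 0 < γ₂)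
    (hρ : ρ ∈ Set.Ioo (0 : ℝ) 1) (hθ : 0 < θ) (hC' : 0 ≤ C') (hϖ : 0 ≤ ϖ)
    (x : ℕ → EuclideanSpace ℝ (Fin n)) (Φ : ℕ → Matrix (Fin n) (Fin n) ℝ)
    (w : ℕ → EuclideanSpace ℝ (Fin n))
    (hdyn : ∀ k, x (k + 1) = toE ((Φ k).mulVec (x k)) + w k)
    (ha : ∀ k, 1 < x k ⬝ᵥ P.mulVec (x k) → ‖w k‖ ^ 2 ≤ θ ∧
      ∃ c : Fin N, ∃ ε : ℝ, 0 < ε ∧ 0 ≤ x k ⬝ᵥ (Q c).mulVec (x k) ∧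
        (Matrix.fromBlocks
          (Matrix.fromBlocks (-((Φ k)ᵀ * P * (Φ k)) + (ρ - γ₁) • P - ε • Q c)
            (-((Φ k)ᵀ * P)) (-(P * (Φ k)))
            ((γ₂ / θ) • (1 : Matrix (Fin n) (Fin n) ℝ) - P))
          0 0 ((γ₁ - γ₂) • (1 : Matrix Unit Unit ℝ))).PosSemidef)
    (hb : ∀ k, x k ⬝ᵥ P.mulVec (x k) ≤ 1 →
      ‖Matrix.toEuclideanCLM (𝕜 := ℝ) (Φ k)‖ ≤ C' ∧ ‖w k‖ ≤ ϖ) :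
    ∃ K : ℕ, ∀ k ≥ K, x k ⬝ᵥ P.mulVec (x k) ≤
      max 1 ((⨆ i, hP.1.eigenvalues i) *
        (C' / Real.sqrt (⨅ i, hP.1.eigenvalues i) + ϖ) ^ 2) := by
  obtain ⟨hρ0, hρ1⟩ := hρ
  haveI : Nonempty (Fin n) := Fin.pos_iff_nonempty.mp hn
  set lmax := ⨆ i, hP.1.eigenvalues i with hlmax
  set lmin := ⨅ i, hP.1.eigenvalues i with hlmin
  set μ := max 1 (lmax * (C' / Real.sqrt lmin + ϖ) ^ 2) with hμ
  set V : ℕ → ℝ := fun k => x k ⬝ᵥ P.mulVec (x k) with hV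
  have hle_max : ∀ i, hP.1.eigenvalues i ≤ lmax :=
    fun i => le_ciSup (Set.Finite.bddAbove (Set.finite_range _)) i
  have hmin_le : ∀ i, lmin ≤ hP.1.eigenvalues i :=
    fun i => ciInf_le (Set.Finite.bddBelow (Set.finite_range _)) i
  have hminpos : 0 < lmin := by
    obtain ⟨i0, hi0⟩ := Finite.exists_min hP.1.eigenvalues
    have : lmin = hP.1.eigenvalues i0 :=
      le_antisymm (hmin_le i0) (le_ciInf hi0)
    rw [this]; exact hP.eigenvalues_pos i0
  have hmaxpos : 0 < lmax := lt_of_lt_of_le hminpos (le_trans (hmin_le ⟨0, hn⟩) (hle_max ⟨0, hn⟩))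
  -- one-step decay outside unit ellipsoid
  have hdecay : ∀ k, 1 < V k → V (k + 1) ≤ ρ * V k := by
    intro k hk
    obtain ⟨hwθ, c, ε, hε, hQx, hPSD⟩ := ha k hk
    have hb2 : (w k : Fin n → ℝ) ⬝ᵥ (w k : Fin n → ℝ) ≤ θ := by
      rw [dot_self_eq_norm_sq]; exact hwθ
    have hstep := decay_step hγ₁ hγ₂ hθ hε hk hb2 hQx hPSD
    show x (k + 1) ⬝ᵥ P.mulVec (x (k + 1)) ≤ ρ * V k
    rw [hdyn k]
    exact hstep
  have hVpos : ∀ k, 0 ≤ V k := fun k => hP.posSemidef.re_dotProduct_nonneg (x k)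
  -- one-step bound inside unit ellipsoid
  have hinside : ∀ k, V k ≤ 1 → V (k + 1) ≤ μ := by
    intro k hk
    obtain ⟨hΦ, hw⟩ := hb k hk
    set s := Real.sqrt lmin with hs
    have hspos : 0 < s := Real.sqrt_pos.mpr hminpos
    have hs2 : s ^ 2 = lmin := Real.sq_sqrt hminpos.le
    -- ‖x k‖ ≤ 1 / s
    have hlow : lmin * ‖x k‖ ^ 2 ≤ V k := by
      have := quad_lower hP.1 hmin_le (x k)
      rwa [dot_self_eq_norm_sq] at this
    have hxk : ‖x k‖ ≤ 1 / s := by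
      have ht0 : 0 ≤ s * ‖x k‖ := mul_nonneg hspos.le (norm_nonneg _)
      have ht2 : (s * ‖x k‖) ^ 2 ≤ 1 := by
        rw [mul_pow, hs2]; linarith
      have ht : s * ‖x k‖ ≤ 1 := by nlinarith [sq_nonneg (s * ‖x k‖ - 1)]
      rw [le_div_iff₀ hspos]; linarith [ht]
    -- ‖x (k+1)‖ ≤ C'/s + ϖ
    have hxe : x (k + 1) = Matrix.toEuclideanCLM (𝕜 := ℝ) (Φ k) (x k) + w k := by
      rw [hdyn k]
      congr 1
    have hnorm : ‖x (k + 1)‖ ≤ C' / s + ϖ := by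
      rw [hxe]
      calc ‖Matrix.toEuclideanCLM (𝕜 := ℝ) (Φ k) (x k) + w k‖
          ≤ ‖Matrix.toEuclideanCLM (𝕜 := ℝ) (Φ k) (x k)‖ + ‖w k‖ := norm_add_le _ _
        _ ≤ ‖Matrix.toEuclideanCLM (𝕜 := ℝ) (Φ k)‖ * ‖x k‖ + ϖ :=
            add_le_add (ContinuousLinearMap.le_opNorm _ _) hw
        _ ≤ C' * (1 / s) + ϖ :=
            add_le_add_left (mul_le_mul hΦ hxk (norm_nonneg _) hC') ϖ
        _ = C' / s + ϖ := by rw [mul_one_div]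
    have hupp : V (k + 1) ≤ lmax * ‖x (k + 1)‖ ^ 2 := by
      have := quad_upper hP.1 hle_max (x (k + 1))
      rwa [dot_self_eq_norm_sq] at this
    have hsq : ‖x (k + 1)‖ ^ 2 ≤ (C' / s + ϖ) ^ 2 := by
      have h0 : (0:ℝ) ≤ ‖x (k + 1)‖ := norm_nonneg _
      nlinarith
    calc V (k + 1) ≤ lmax * ‖x (k + 1)‖ ^ 2 := hupp
      _ ≤ lmax * (C' / s + ϖ) ^ 2 := mul_le_mul_of_nonneg_left hsq hmaxpos.le
      _ ≤ μ := le_max_right _ _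
  -- invariance of E(P, μ)
  have hinv : ∀ k, V k ≤ μ → V (k + 1) ≤ μ := by
    intro k hk
    by_cases h1 : V k ≤ 1
    · exact hinside k h1
    · push_neg at h1
      calc V (k + 1) ≤ ρ * V k := hdecay k h1
        _ ≤ 1 * V k := mul_le_mul_of_nonneg_right hρ1.le (hVpos k)
        _ = V k := one_mul _
        _ ≤ μ := hk
  -- existence of K with V K ≤ 1 ≤ μ
  have hK : ∃ K, V K ≤ μ := by
    by_cases hall : ∀ k, 1 < V k
    · exfalso
      have hgeo : ∀ k, V k ≤ ρ ^ k * V 0 := by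
        intro k
        induction k with
        | zero => simp
        | succ m ih =>
          calc V (m + 1) ≤ ρ * V m := hdecay m (hall m)
            _ ≤ ρ * (ρ ^ m * V 0) := mul_le_mul_of_nonneg_left ih hρ0.le
            _ = ρ ^ (m + 1) * V 0 := by ring
      have hV0 : 0 < V 0 := lt_trans one_pos (hall 0)
      obtain ⟨k, hkk⟩ := exists_pow_lt_of_lt_one (div_pos one_pos hV0) hρ1
      have : V k < 1 := by
        calc V k ≤ ρ ^ k * V 0 := hgeo k
          _ < (1 / V 0) * V 0 := mul_lt_mul_of_pos_right hkk hV0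
          _ = 1 := by field_simp
      exact absurd this (not_lt.mpr (hall k).le)
    · push_neg at hall
      obtain ⟨K, hKle⟩ := hall
      exact ⟨K, le_trans hKle (le_max_left _ _)⟩
  obtain ⟨K, hKμ⟩ := hK
  refine ⟨K, fun k hk => ?_⟩
  induction k, hk using Nat.le_induction with
  | base => exact hKμ
  | succ m hm ih => exact hinv m ih
end
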